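/- Let e_(N) = (1/m)·e_{N+1} in aTL_{N+2}(m) with m ≠ 0. Under the map ψ: u ↦ m·e_(N)·u·e_(N) (as an element of e_(N) aTL_{N+2} e_(N)), one has the relation ψ(u)² · ψ(e_{N-1}) = ψ(e_1)⋯ψ(e_{N-1}), where ψ(e_j) = e_(N) e_j for 1 ≤ j ≤ N−1; concretely, m^{-2} e_{N+1} u e_{N+1} u e_{N+1} e_{N-1} = m^{-1} e_1 e_2 ⋯ e_{N-1} e_{N+1} in aTL_{N+2}(m). -/

import Mathlib

/-- The defining relations of the affine Temperley–Lieb algebra `aTL_N(m)`: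
`u` is invertible, `e_j² = m e_j`, `e_j e_{j±1} e_j = e_j`, distant `e`'s commute,
`u e_j u⁻¹ = e_{j+1}`, and `u² e_{N−1} = e_1 ⋯ e_{N−1}` (indices in `ℤ/Nℤ`,
so `e_{N−1} = e (−1)`). -/
structure AffineTLRel (A : Type*) [Ring A] [Algebra ℂ A] (N : ℕ)
    (m : ℂ) (u uinv : A) (e : ZMod N → A) : Prop where
  mul_uinv : u * uinv = 1
  uinv_mul : uinv * u = 1
  esq : ∀ j, e j * e j = m • e j
  eje : ∀ j, e j * e (j + 1) * e j = e j
  eje' : ∀ j, e (j + 1) * e j * e (j + 1) = e (j + 1)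
  ecomm : ∀ j l, j ≠ l → j ≠ l + 1 → l ≠ j + 1 → e j * e l = e l * e j
  uconj : ∀ j, u * e j * uinv = e (j + 1)
  utwist : u * u * e (-1) =
    ((List.range (N - 1)).map (fun t => e ((t + 1 : ℕ) : ZMod N))).prod

lemma prodE_aux {A : Type*} [Ring A] [Algebra ℂ A] (m : ℂ) (hm : m ≠ 0) (E : A)
    (hE : E * E = m • E) :
    ∀ (l : List ℕ) (F : ℕ → A), l ≠ [] → (∀ t ∈ l, E * F t = F t * E) →
      (l.map (fun t => m⁻¹ • (E * F t))).prod = m⁻¹ • (E * (l.map F).prod) := by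
  intro l
  induction l with
  | nil => intro F h _; exact absurd rfl h
  | cons x t ih =>
    intro F _ hcs
    by_cases ht : t = []
    · subst ht; simp
    · have hrec := ih F ht (fun z hz => hcs z (List.mem_cons_of_mem _ hz))
      simp only [List.map_cons, List.prod_cons]
      rw [hrec]
      have hx := hcs x List.mem_cons_self
      rw [smul_mul_assoc, mul_smul_comm, smul_smul]
      rw [show (E * F x) * (E * (t.map F).prod) = m • (E * (F x * (t.map F).prod)) by
        rw [hx, mul_assoc, ← mul_assoc E E, hE, smul_mul_assoc, mul_smul_comm,
          ← mul_assoc, ← hx, mul_assoc]]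
      rw [smul_smul]
      congr 1
      field_simp

theorem atl_compression_twist_relation (A : Type*) [Ring A] [Algebra ℂ A]
    (N : ℕ) (hN : 2 ≤ N) (m : ℂ) (hm : m ≠ 0)
    (u uinv : A) (e : ZMod (N + 2) → A)
    (hrel : AffineTLRel A (N + 2) m u uinv e) :
    let eN : A := m⁻¹ • e (-1)
    let ψu : A := m • (eN * u * eN)
    ψu * ψu * (eN * e ((N - 1 : ℕ) : ZMod (N + 2)))
      = ((List.range (N - 1)).map (fun t => eN * e ((t + 1 : ℕ) : ZMod (N + 2)))).prod := by
  obtain ⟨M, rfl⟩ : ∃ M, N = M + 2 := ⟨N - 2, by omega⟩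
  show (m • ((m⁻¹ • e (-1)) * u * (m⁻¹ • e (-1)))) * (m • ((m⁻¹ • e (-1)) * u * (m⁻¹ • e (-1))))
      * ((m⁻¹ • e (-1)) * e ((M + 2 - 1 : ℕ) : ZMod (M + 2 + 2)))
      = ((List.range (M + 2 - 1)).map
          (fun t => (m⁻¹ • e (-1)) * e ((t + 1 : ℕ) : ZMod (M + 2 + 2)))).prod
  set E : A := e (-1) with hE
  -- basic cast facts
  have hneq : ∀ a b : ℕ, a < M + 4 → b < M + 4 → a ≠ b →
      ((a : ZMod (M + 2 + 2)) ≠ (b : ZMod (M + 2 + 2))) := by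
    intro a b ha hb hab h
    apply hab
    have h2 := congrArg ZMod.val h
    rwa [ZMod.val_cast_of_lt (by omega), ZMod.val_cast_of_lt (by omega)] at h2
  have hN1 : ((M + 3 : ℕ) : ZMod (M + 2 + 2)) = -1 := by
    have h0 : ((M + 4 : ℕ) : ZMod (M + 2 + 2)) = 0 := ZMod.natCast_self (M + 2 + 2)
    push_cast at h0 ⊢
    linear_combination h0
  -- commutation of E with e_a for 1 ≤ a ≤ M+1
  have hcomm : ∀ a : ℕ, 1 ≤ a → a ≤ M + 1 →
      E * e ((a : ℕ) : ZMod (M + 2 + 2)) = e ((a : ℕ) : ZMod (M + 2 + 2)) * E := by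
    intro a h1 h2
    rw [hE]
    refine hrel.ecomm (-1) _ ?_ ?_ ?_
    · rw [← hN1]; exact hneq (M + 3) a (by omega) (by omega) (by omega)
    · rw [← hN1]
      have : ((a : ZMod (M + 2 + 2)) + 1) = ((a + 1 : ℕ) : ZMod (M + 2 + 2)) := by push_cast; ring
      rw [this]
      exact hneq (M + 3) (a + 1) (by omega) (by omega) (by omega)
    · rw [neg_add_cancel]
      have : (0 : ZMod (M + 2 + 2)) = ((0 : ℕ) : ZMod (M + 2 + 2)) := by norm_num
      rw [this]
      exact hneq a 0 (by omega) (by omega) (by omega)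
  -- u moves past E
  have hu0 : u * E = e 0 * u := by
    have h := hrel.uconj (-1)
    rw [neg_add_cancel] at h
    calc u * E = u * E * (uinv * u) := by rw [hrel.uinv_mul, mul_one]
      _ = (u * E * uinv) * u := (mul_assoc (u * E) uinv u).symm
      _ = e 0 * u := by rw [← hE] at h; rw [h]
  have hu : ∀ x : A, u * (E * x) = e 0 * (u * x) := by
    intro x; rw [← mul_assoc, hu0, mul_assoc]
  -- the twist
  have hP : u * u * E = ((List.range (M + 3)).map
      (fun t => e ((t + 1 : ℕ) : ZMod (M + 2 + 2)))).prod := hrel.utwist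
  have htw : ∀ x : A, u * (u * (E * x)) =
      ((List.range (M + 3)).map (fun t => e ((t + 1 : ℕ) : ZMod (M + 2 + 2)))).prod * x := by
    intro x
    rw [← mul_assoc, ← mul_assoc, hP]
  -- abbreviations
  set L1 : A := ((List.range (M + 1)).map
      (fun t => e ((t + 1 : ℕ) : ZMod (M + 2 + 2)))).prod with hL1
  -- splitting the big product
  have h3 : ((List.range (M + 3)).map
      (fun t => e ((t + 1 : ℕ) : ZMod (M + 2 + 2)))).prod
      = L1 * e ((M + 1 + 1 : ℕ) : ZMod (M + 2 + 2)) * e ((M + 2 + 1 : ℕ) : ZMod (M + 2 + 2)) := by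
    rw [hL1, List.range_succ (n := M + 2), List.range_succ (n := M + 1)]
    simp [mul_assoc]
  have hL1split : L1 = ((List.range M).map
      (fun t => e ((t + 1 : ℕ) : ZMod (M + 2 + 2)))).prod * e ((M + 1 : ℕ) : ZMod (M + 2 + 2)) := by
    rw [hL1, List.range_succ (n := M)]
    simp
  -- the key TL computation:  P * e_{M+1} = L1 * E
  have hPK : ((List.range (M + 3)).map
      (fun t => e ((t + 1 : ℕ) : ZMod (M + 2 + 2)))).prod * e ((M + 1 : ℕ) : ZMod (M + 2 + 2))
      = L1 * E := by
    rw [h3]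
    have hE3 : e ((M + 2 + 1 : ℕ) : ZMod (M + 2 + 2)) = E := by
      rw [show (M + 2 + 1 : ℕ) = M + 3 from rfl, hN1, hE]
    rw [hE3]
    -- L1 * e₂ * E * e₁ = L1 * E
    have hcm : E * e ((M + 1 : ℕ) : ZMod (M + 2 + 2))
        = e ((M + 1 : ℕ) : ZMod (M + 2 + 2)) * E := hcomm (M + 1) (by omega) (by omega)
    rw [mul_assoc, hcm, ← mul_assoc]
    -- now : L1 * e₂ * e₁ * E = L1 * E ; use eje
    have hej : e ((M + 1 : ℕ) : ZMod (M + 2 + 2)) * e ((M + 1 + 1 : ℕ) : ZMod (M + 2 + 2))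
        * e ((M + 1 : ℕ) : ZMod (M + 2 + 2)) = e ((M + 1 : ℕ) : ZMod (M + 2 + 2)) := by
      have := hrel.eje ((M + 1 : ℕ) : ZMod (M + 2 + 2))
      have hcast : ((M + 1 : ℕ) : ZMod (M + 2 + 2)) + 1 = ((M + 1 + 1 : ℕ) : ZMod (M + 2 + 2)) := by
        push_cast; ring
      rwa [hcast] at this
    conv_lhs => rw [hL1split]
    rw [mul_assoc _ _ (e ((M + 1 + 1 : ℕ) : ZMod (M + 2 + 2))),
      mul_assoc ((List.range M).map _).prod, mul_assoc ((List.range M).map _).prod,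
      hej, ← mul_assoc, ← hL1split]
  -- E commutes with L1
  have hcL : L1 * E = E * L1 := by
    rw [hL1]
    refine (Commute.list_prod_right _ _ ?_).symm
    intro x hx
    simp only [List.mem_map, List.mem_range] at hx
    obtain ⟨t, htlt, rfl⟩ := hx
    exact hcomm (t + 1) (by omega) (by omega)
  -- e_{-1} e_0 e_{-1} = e_{-1}
  have h9 : E * e 0 * E = E := by
    have := hrel.eje (-1)
    rw [neg_add_cancel] at this
    rw [hE]; exact this
  -- the key identity
  have key : E * (u * (E * (u * (E * e ((M + 1 : ℕ) : ZMod (M + 2 + 2)))))) = E * L1 := by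
    rw [hu, htw, hPK, hcL, ← mul_assoc, ← mul_assoc, h9]
  -- squared idempotent helper
  have hEE : ∀ x : A, E * (E * x) = m • (E * x) := by
    intro x
    rw [← mul_assoc, hrel.esq (-1), ← hE, smul_mul_assoc]
  -- now assemble
  have hcast1 : ((M + 2 - 1 : ℕ) : ZMod (M + 2 + 2)) = ((M + 1 : ℕ) : ZMod (M + 2 + 2)) := rfl
  rw [hcast1]
  calc (m • ((m⁻¹ • E) * u * (m⁻¹ • E))) * (m • ((m⁻¹ • E) * u * (m⁻¹ • E)))
      * ((m⁻¹ • E) * e ((M + 1 : ℕ) : ZMod (M + 2 + 2)))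
      = m⁻¹ • (E * (u * (E * (u * (E * e ((M + 1 : ℕ) : ZMod (M + 2 + 2))))))) := by
        simp only [smul_mul_assoc, mul_smul_comm, smul_smul, mul_assoc]
        rw [hEE, hEE]
        simp only [mul_smul_comm, smul_smul]
        congr 1
        field_simp
    _ = m⁻¹ • (E * L1) := by rw [key]
    _ = ((List.range (M + 2 - 1)).map
          (fun t => (m⁻¹ • E) * e ((t + 1 : ℕ) : ZMod (M + 2 + 2)))).prod := by
        have hfun : (fun t : ℕ => (m⁻¹ • E) * e ((t + 1 : ℕ) : ZMod (M + 2 + 2)))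
            = fun t : ℕ => m⁻¹ • (E * e ((t + 1 : ℕ) : ZMod (M + 2 + 2))) := by
          funext t; rw [smul_mul_assoc]
        rw [hfun, show (M + 2 - 1 : ℕ) = M + 1 from rfl,
          prodE_aux m hm E (by rw [hE]; exact hrel.esq (-1)) (List.range (M + 1)) _
            (by simp) (fun t ht => by
              simp only [List.mem_range] at ht
              exact hcomm (t + 1) (by omega) (by omega)), hL1]
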